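/- Let α be a Wang bar of length n over a color alphabet, given by north word α_N and south word α_S, both of length n, and with equal east and west colors. Suppose there exists p with 0 < p < n such that α_S = u·v with |u| = n−p, |v| = p, and α_N = v·u. Then the biinfinite row obtained by repeating α tiles the plane periodically: stacking copies of this row, each shifted horizontally by p relative to the one below, yields a valid periodic tiling of the plane by the single bar α. -/
import Mathlib

structure WangBar (V C : Type) where
  e : V
  w : V
  n : List C
  s : List C
deriving DecidableEq

/-- A tiling of the plane by a barset `B`: `f` gives the bar covering each cell,
`g` gives the (1-based) position of the cell inside its bar. -/
def IsBarTiling {V C : Type} (B : Set (WangBar V C)) (f : ℤ → ℤ → WangBar V C)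
    (g : ℤ → ℤ → ℕ) : Prop :=
  (∀ i j, f i j ∈ B) ∧
  (∀ i j, 0 < g i j ∧ g i j ≤ (f i j).n.length) ∧
  (∀ i j, g i j < (f i j).n.length → g (i+1) j = g i j + 1 ∧ f (i+1) j = f i j) ∧
  (∀ i j, g i j = (f i j).n.length → g (i+1) j = 1 ∧ (f i j).e = (f (i+1) j).w) ∧
  (∀ i j, (f i j).n[g i j - 1]? = (f i (j+1)).s[g i (j+1) - 1]?)

theorem stmt6 {V C : Type} (α : WangBar V C) (n p : ℕ)
    (hew : α.e = α.w)
    (hn : α.n.length = n) (hs : α.s.length = n)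
    (u v : List C) (hu : u.length = n - p) (hv : v.length = p)
    (hS : α.s = u ++ v) (hN : α.n = v ++ u)
    (hp0 : 0 < p) (hpn : p < n) :
    ∃ f g, IsBarTiling ({α} : Set (WangBar V C)) f g ∧
      (∀ i j : ℤ, g (i + (n : ℤ)) j = g i j) ∧
      (∀ i j : ℤ, g (i + (p : ℤ)) (j + 1) = g i j) := by
  have hn0 : (0:ℤ) < (n:ℤ) := by exact_mod_cast hp0.trans hpn
  have hn2 : (1:ℤ) < (n:ℤ) := by exact_mod_cast (by omega : 1 < n)
  have hnne : (n:ℤ) ≠ 0 := hn0.ne'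
  have hk0 : ∀ a : ℤ, 0 ≤ a % (n:ℤ) := fun a => Int.emod_nonneg a hnne
  have hk1 : ∀ a : ℤ, a % (n:ℤ) < n := fun a => Int.emod_lt_of_pos a hn0
  have h1n : (1:ℤ) % n = 1 := Int.emod_eq_of_lt (by norm_num) hn2
  have hpmod : (p:ℤ) % n = p := Int.emod_eq_of_lt (by positivity) (by exact_mod_cast hpn)
  refine ⟨fun _ _ => α, fun i j => ((i - (p:ℤ) * j) % (n:ℤ)).toNat + 1, ?_, ?_, ?_⟩
  · refine ⟨fun _ _ => rfl, ?_, ?_, ?_, ?_⟩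
    · intro i j
      dsimp only
      have := hk1 (i - (p:ℤ) * j)
      have := hk0 (i - (p:ℤ) * j)
      constructor
      · omega
      · rw [hn]; omega
    · intro i j h
      dsimp only at h ⊢
      rw [hn] at h
      refine ⟨?_, rfl⟩
      have h1 : (i - (p:ℤ)*j) % n + 1 < n := by
        have := hk0 (i - (p:ℤ) * j); omega
      have h2 : (i + 1 - (p:ℤ)*j) % n = (i - (p:ℤ)*j) % n + 1 := by
        have e1 : i + 1 - (p:ℤ)*j = (i - (p:ℤ)*j) + 1 := by ring
        rw [e1, Int.add_emod, h1n,
          Int.emod_eq_of_lt (by have := hk0 (i - (p:ℤ)*j); omega) h1]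
      rw [h2]
      have := hk0 (i - (p:ℤ) * j); omega
    · intro i j h
      dsimp only at h ⊢
      rw [hn] at h
      refine ⟨?_, hew⟩
      have h1 : (i - (p:ℤ)*j) % n = n - 1 := by
        have := hk0 (i - (p:ℤ) * j); have := hk1 (i - (p:ℤ) * j); omega
      have h2 : (i + 1 - (p:ℤ)*j) % n = 0 := by
        have e1 : i + 1 - (p:ℤ)*j = (i - (p:ℤ)*j) + 1 := by ring
        rw [e1, Int.add_emod, h1, h1n]
        simp
      rw [h2]; rfl
    · intro i j
      dsimp only
      simp only [Nat.add_sub_cancel]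
      set a : ℤ := i - (p:ℤ) * j with ha
      have ha' : i - (p:ℤ) * (j+1) = a - p := by rw [ha]; ring
      rw [ha']
      have hk0 := hk0 a
      have hk1 := hk1 a
      set k : ℕ := (a % (n:ℤ)).toNat with hkdef
      have hk : a % (n:ℤ) = (k:ℤ) := by omega
      have hkn : k < n := by omega
      have hsub : (a - (p:ℤ)) % n = ((k:ℤ) - p) % n := by
        rw [Int.sub_emod, hk, hpmod]
      by_cases hc : k < p
      · have h2 : (a - (p:ℤ)) % n = (k:ℤ) + n - p := by
          rw [hsub]
          have e2 : (k:ℤ) - p = ((k:ℤ) + n - p) + (n:ℤ) * (-1) := by ring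
          rw [e2, Int.add_mul_emod_self_left]
          rw [Int.emod_eq_of_lt (by omega) (by omega)]
        have h3 : ((a - (p:ℤ)) % n).toNat = k + (n - p) := by omega
        rw [h3, hN, hS]
        rw [List.getElem?_append_left (by omega), List.getElem?_append_right (by omega)]
        congr 1
        omega
      · have h2 : (a - (p:ℤ)) % n = (k:ℤ) - p := by
          rw [hsub, Int.emod_eq_of_lt (by omega) (by omega)]
        have h3 : ((a - (p:ℤ)) % n).toNat = k - p := by omega
        rw [h3, hN, hS]
        rw [List.getElem?_append_right (by omega), List.getElem?_append_left (by omega)]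
        congr 1
        omega
  · intro i j
    dsimp only
    have e : i + (n:ℤ) - (p:ℤ)*j = (i - (p:ℤ)*j) + (n:ℤ)*1 := by ring
    rw [e, Int.add_mul_emod_self_left]
  · intro i j
    dsimp only
    have e : i + (p:ℤ) - (p:ℤ)*(j+1) = i - (p:ℤ)*j := by ring
    rw [e]
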